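/- Let G = (A, SPath^T_w) be a two-player zero-sum shortest-path game on a possibly infinite arena. Then player 1 has a memoryless strategy σ_1 that is uniformly optimal in G (from every vertex v, every play consistent with σ_1 from v has shortest-path cost at most val(v)) and that is uniformly winning in the zero-sum reachability game (A, Reach(T)) (from every vertex of player 1's winning region for Reach(T), every play consistent with σ_1 visits T). -/

import Mathlib

open scoped ENNReal Classical

/-- An `n`-player arena on a (possibly infinite) directed graph: an edge relation
with no deadlocks, together with an assignment of each vertex to its owner. -/
structure Arena (V : Type) (n : ℕ) where
  E : V → V → Prop
  owner : V → Fin n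
  no_deadlock : ∀ v, ∃ v', E v v'

namespace Arena

variable {V : Type} {n : ℕ}

/-- A play: an infinite sequence of vertices following edges. -/
def IsPlay (A : Arena V n) (π : ℕ → V) : Prop := ∀ j, A.E (π j) (π (j + 1))

/-- A strategy: given the past history (the earlier vertices, oldest first) and the
current vertex, pick an `E`-successor of the current vertex. -/
structure Strategy (A : Arena V n) where
  next : List V → V → V
  valid : ∀ h v, A.E v (next h v)

/-- The list of the first `j` vertices of a play. -/
def pref (π : ℕ → V) (j : ℕ) : List V := (List.range j).map π

/-- A play is consistent with the strategy `σ` used by player `i`. -/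
def Consistent (A : Arena V n) (i : Fin n) (σ : A.Strategy) (π : ℕ → V) : Prop :=
  ∀ j, A.owner (π j) = i → π (j + 1) = σ.next (pref π j) (π j)

/-- A memoryless strategy only depends on the current vertex. -/
def Memoryless {A : Arena V n} (σ : A.Strategy) : Prop :=
  ∀ h h' v, σ.next h v = σ.next h' v

def outcomeAux (A : Arena V n) (σ : Fin n → A.Strategy) (v0 : V) : ℕ → List V × V
  | 0 => ([], v0)
  | j + 1 =>
      let p := outcomeAux A σ v0 j
      (p.1 ++ [p.2], (σ (A.owner p.2)).next p.1 p.2)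

/-- The outcome of the strategy profile `σ` from `v0`: the unique play from `v0`
consistent with every strategy of the profile. -/
def outcome (A : Arena V n) (σ : Fin n → A.Strategy) (v0 : V) (j : ℕ) : V :=
  (outcomeAux A σ v0 j).2

/-- Reachability objective: visit `T`. -/
def ReachObj (T : Set V) : Set (ℕ → V) := {π | ∃ j, π j ∈ T}

/-- Safety objective: never visit `T`. -/
def SafeObj (T : Set V) : Set (ℕ → V) := {π | ∀ j, π j ∉ T}

/-- Büchi objective: visit `T` infinitely often. -/
def BuchiObj (T : Set V) : Set (ℕ → V) := {π | ∀ j, ∃ k, j ≤ k ∧ π k ∈ T}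

/-- co-Büchi objective: visit `T` only finitely often. -/
def CoBuchiObj (T : Set V) : Set (ℕ → V) := {π | ∃ j, ∀ k, j ≤ k → π k ∉ T}

/-- Shortest-path cost of a play: the total weight up to the first visit of `T`,
and `⊤` if `T` is never visited. -/
noncomputable def spCost (w : V → V → ℕ) (T : Set V) (π : ℕ → V) : ℝ≥0∞ :=
  if ∃ k, π k ∈ T then
    (Finset.range (sInf {k | π k ∈ T})).sum fun j => (w (π j) (π (j + 1)) : ℝ≥0∞)
  else ⊤

/-- Winning region of player `p` (whose objective is `Ω`) in a two-player game:
vertices from which `p` has a strategy all of whose consistent plays lie in `Ω`. -/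
def WinRegion (A : Arena V 2) (p : Fin 2) (Ω : Set (ℕ → V)) : Set V :=
  {v | ∃ σ : A.Strategy, ∀ π, A.IsPlay π → π 0 = v → A.Consistent p σ π → π ∈ Ω}

/-- Lower value `inf_{σ₁} sup_{σ₂}` of a two-player zero-sum game with cost `c`
(minimised by player 1, maximised by player 2). -/
noncomputable def valIS (A : Arena V 2) (c : (ℕ → V) → ℝ≥0∞) (v : V) : ℝ≥0∞ :=
  ⨅ σ1 : A.Strategy, ⨆ σ2 : A.Strategy, c (outcome A ![σ1, σ2] v)

/-- Upper value `sup_{σ₂} inf_{σ₁}`. -/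
noncomputable def valSI (A : Arena V 2) (c : (ℕ → V) → ℝ≥0∞) (v : V) : ℝ≥0∞ :=
  ⨆ σ2 : A.Strategy, ⨅ σ1 : A.Strategy, c (outcome A ![σ1, σ2] v)

/-- Nash equilibrium from `v0` for cost functions (each player minimises):
no unilateral deviation decreases the deviator's cost. -/
def IsNECost (A : Arena V n) (cost : Fin n → (ℕ → V) → ℝ≥0∞)
    (σ : Fin n → A.Strategy) (v0 : V) : Prop :=
  ∀ (i : Fin n) (τ : A.Strategy),
    cost i (outcome A σ v0) ≤ cost i (outcome A (Function.update σ i τ) v0)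

/-- Nash equilibrium from `v0` for objectives: if a unilateral deviation of player `i`
satisfies `Ω i`, then so does the equilibrium outcome. -/
def IsNEObj (A : Arena V n) (Ω : Fin n → Set (ℕ → V))
    (σ : Fin n → A.Strategy) (v0 : V) : Prop :=
  ∀ (i : Fin n) (τ : A.Strategy),
    outcome A (Function.update σ i τ) v0 ∈ Ω i → outcome A σ v0 ∈ Ω i

/-- The coalition arena of player `i`: player `i` (as player `0`) against all others. -/
def coalition (A : Arena V n) (i : Fin n) : Arena V 2 where
  E := A.E
  owner := fun v => if A.owner v = i then 0 else 1
  no_deadlock := A.no_deadlock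

/-- Winning region of player `i` in their coalition game for objective `Ω`. -/
def coalWin (A : Arena V n) (i : Fin n) (Ω : Set (ℕ → V)) : Set V :=
  WinRegion (coalition A i) 0 Ω

/-- Value of a vertex in player `i`'s coalition game with cost `c`. -/
noncomputable def coalVal (A : Arena V n) (i : Fin n) (c : (ℕ → V) → ℝ≥0∞) (v : V) :
    ℝ≥0∞ :=
  valIS (coalition A i) c v

/-- Players whose reachability objective is satisfied by `π`. -/
def satReach (T : Fin n → Set V) (π : ℕ → V) : Set (Fin n) := {i | ∃ j, π j ∈ T i}

/-- Players whose safety objective is satisfied by `π`. -/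
def satSafe (T : Fin n → Set V) (π : ℕ → V) : Set (Fin n) := {i | ∀ j, π j ∉ T i}

/-- Players whose Büchi objective is satisfied by `π`. -/
def satBuchi (T : Fin n → Set V) (π : ℕ → V) : Set (Fin n) :=
  {i | ∀ j, ∃ k, j ≤ k ∧ π k ∈ T i}

/-- Players whose co-Büchi objective is satisfied by `π`. -/
def satCoBuchi (T : Fin n → Set V) (π : ℕ → V) : Set (Fin n) :=
  {i | ∃ j, ∀ k, j ≤ k → π k ∉ T i}

/-- Earliest positions at which the targets visited by `π` are first visited. -/
def visitSet (T : Fin n → Set V) (π : ℕ → V) : Set ℕ :=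
  {m | ∃ i, (∃ j, π j ∈ T i) ∧ m = sInf {j | π j ∈ T i}}

/-- A Mealy machine with memory states `M`. -/
structure Mealy (A : Arena V n) (M : Type) where
  init : M
  up : M → V → M
  nxt : M → V → V
  valid : ∀ m v, A.E v (nxt m v)

/-- The strategy `σ` is induced by the Mealy machine `mm`. -/
def InducedBy {A : Arena V n} {M : Type} (σ : A.Strategy) (mm : Mealy A M) : Prop :=
  ∀ h v, σ.next h v = mm.nxt (h.foldl mm.up mm.init) v

/-- `σ` has memory size at most `b`. -/
def HasMemorySize {A : Arena V n} (σ : A.Strategy) (b : ℕ) : Prop :=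
  ∃ (M : Type) (mm : Mealy A M), Finite M ∧ Nat.card M ≤ b ∧ InducedBy σ mm

/-- `σ` is a finite-memory strategy. -/
def FiniteMemory {A : Arena V n} (σ : A.Strategy) : Prop :=
  ∃ (M : Type) (mm : Mealy A M), Finite M ∧ InducedBy σ mm

/-- The (finite) segment of `π` between positions `a` and `b` is a simple history. -/
def SimpleSeg (π : ℕ → V) (a b : ℕ) : Prop :=
  ∀ m m', a ≤ m → m ≤ b → a ≤ m' → m' ≤ b → π m = π m' → m = m'

/-- The suffix of `π` from position `a` is a simple play. -/
def SimplePlaySeg (π : ℕ → V) (a : ℕ) : Prop :=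
  ∀ m m', a ≤ m → a ≤ m' → π m = π m' → m = m'

/-- The suffix of `π` from position `a` is a simple lasso `p c^ω` with `p c`
a simple history. -/
def SimpleLassoSeg (π : ℕ → V) (a : ℕ) : Prop :=
  ∃ k ℓ, 0 < ℓ ∧ (∀ m, a + k ≤ m → π (m + ℓ) = π m) ∧
    ∀ m m', a ≤ m → m < a + k + ℓ → a ≤ m' → m' < a + k + ℓ → π m = π m' → m = m'

/-- The segment of `π` between positions `a` and `b` is a simple cycle. -/
def SimpleCycleSeg (π : ℕ → V) (a b : ℕ) : Prop :=
  a < b ∧ π b = π a ∧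
    ∀ m m', a ≤ m → m < b → a ≤ m' → m' < b → π m = π m' → m = m'

/-- Total weight of a history (a list of vertices). -/
def histWeight (w : V → V → ℕ) : List V → ℕ
  | [] => 0
  | [_] => 0
  | a :: b :: t => w a b + histWeight w (b :: t)

/-- The list of vertices along positions `a..b` (inclusive) of a play. -/
def segList (π : ℕ → V) (a b : ℕ) : List V :=
  (List.range (b - a + 1)).map fun m => π (a + m)

/-- The segment of `π` between positions `a` and `b` has minimal weight among all
histories that share its first and last vertex and traverse only its vertices. -/
def MinWeightSeg (A : Arena V n) (w : V → V → ℕ) (π : ℕ → V) (a b : ℕ) : Prop :=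
  ∀ h : List V, h ≠ [] → List.Chain' A.E h →
    h.head? = some (π a) → h.getLast? = some (π b) →
    (∀ x ∈ h, ∃ m, a ≤ m ∧ m ≤ b ∧ π m = x) →
    histWeight w (segList π a b) ≤ histWeight w h

/-- Given cut positions `p`, segments number `l` and `l'` of `π` carry the same
vertex sequence. -/
def SegEq (π : ℕ → V) (p : ℕ → ℕ) (l l' : ℕ) : Prop :=
  p (l' + 1) - p l' = p (l + 1) - p l ∧
    ∀ m, m ≤ p (l + 1) - p l → π (p l' + m) = π (p l + m)

/-- There is no cycle of the arena using only vertices of `S` and avoiding `avoid`. -/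
def NoCycleAvoid (A : Arena V n) (S : Set V) (avoid : V) : Prop :=
  ¬ ∃ (m : ℕ) (c : ℕ → V), 0 < m ∧ (∀ j, j < m → A.E (c j) (c (j + 1))) ∧
      c m = c 0 ∧ ∀ j, j ≤ m → c j ∈ S ∧ c j ≠ avoid

end Arena

open Arena



namespace SPA

/-- `x` is a natural number or `⊤`. -/
def NatInf (x : ℝ≥0∞) : Prop := x = ⊤ ∨ ∃ n : ℕ, x = n

lemma natinf_floor {x : ℝ≥0∞} (hx : x ≠ ⊤) :
    ∃ n : ℕ, (n : ℝ≥0∞) ≤ x ∧ x < (n : ℝ≥0∞) + 1 := by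
  refine ⟨⌊x.toReal⌋₊, ?_, ?_⟩
  · calc ((⌊x.toReal⌋₊ : ℕ) : ℝ≥0∞)
        = ENNReal.ofReal (⌊x.toReal⌋₊ : ℝ) := (ENNReal.ofReal_natCast _).symm
    _ ≤ ENNReal.ofReal x.toReal := ENNReal.ofReal_le_ofReal (Nat.floor_le ENNReal.toReal_nonneg)
    _ = x := ENNReal.ofReal_toReal hx
  · have h1 : x.toReal < (⌊x.toReal⌋₊ : ℝ) + 1 := Nat.lt_floor_add_one _
    calc x = ENNReal.ofReal x.toReal := (ENNReal.ofReal_toReal hx).symm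
    _ < ENNReal.ofReal ((⌊x.toReal⌋₊ : ℝ) + 1) := by
        rw [ENNReal.ofReal_lt_ofReal_iff (by positivity)]; exact h1
    _ = (⌊x.toReal⌋₊ : ℝ≥0∞) + 1 := by
        rw [ENNReal.ofReal_add (by positivity) zero_le_one]
        simp [ENNReal.ofReal_natCast]

lemma natinf_add_nat {x : ℝ≥0∞} (m : ℕ) (hx : NatInf x) : NatInf ((m : ℝ≥0∞) + x) := by
  rcases hx with h | ⟨n, rfl⟩
  · left; simp [h]
  · right; exact ⟨m + n, by push_cast; ring⟩

lemma natinf_succ_le {a b : ℝ≥0∞} (ha : NatInf a) (hb : NatInf b) (h : a < b) :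
    a + 1 ≤ b := by
  rcases ha with rfl | ⟨n, rfl⟩
  · exact absurd h (by simp)
  rcases hb with rfl | ⟨m, rfl⟩
  · exact le_top
  · have : n < m := by exact_mod_cast h
    have : (n + 1 : ℕ) ≤ m := this
    calc (n : ℝ≥0∞) + 1 = ((n + 1 : ℕ) : ℝ≥0∞) := by push_cast; ring
    _ ≤ (m : ℝ≥0∞) := by exact_mod_cast this

lemma natinf_iSup {ι : Sort*} {f : ι → ℝ≥0∞} (hf : ∀ i, NatInf (f i)) :
    NatInf (⨆ i, f i) := by
  by_cases hs : (⨆ i, f i) = ⊤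
  · left; exact hs
  obtain ⟨n, hn1, hn2⟩ := natinf_floor hs
  right; refine ⟨n, le_antisymm ?_ hn1⟩
  refine iSup_le fun i => ?_
  rcases hf i with h | ⟨m, hm⟩
  · exact absurd (top_le_iff.mp (h ▸ le_iSup f i)) hs
  · rw [hm]
    have : f i < (n : ℝ≥0∞) + 1 := lt_of_le_of_lt (le_iSup f i) hn2
    rw [hm] at this
    have : m < n + 1 := by exact_mod_cast (by push_cast at this ⊢; exact_mod_cast this : (m:ℝ≥0∞) < ((n+1:ℕ):ℝ≥0∞))
    exact_mod_cast Nat.lt_succ_iff.mp this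

lemma natinf_iInf_attained {ι : Sort*} [Nonempty ι] {f : ι → ℝ≥0∞} (hf : ∀ i, NatInf (f i)) :
    NatInf (⨅ i, f i) ∧ ∃ i, f i ≤ ⨅ j, f j := by
  by_cases hs : (⨅ i, f i) = ⊤
  · exact ⟨Or.inl hs, ⟨Classical.arbitrary ι, le_of_eq (by
      have := iInf_le f (Classical.arbitrary ι)
      rw [hs] at this ⊢
      exact top_le_iff.mp this |>.symm ▸ rfl)⟩⟩
  obtain ⟨n, hn1, hn2⟩ := natinf_floor hs
  obtain ⟨i, hi⟩ := iInf_lt_iff.mp hn2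
  rcases hf i with h | ⟨m, hm⟩
  · exact absurd (h ▸ hi) (by simp)
  have hmn : m ≤ n := by
    have : (m : ℝ≥0∞) < ((n + 1 : ℕ) : ℝ≥0∞) := by rw [← hm]; push_cast; exact hi
    exact Nat.lt_succ_iff.mp (by exact_mod_cast this)
  have hle : f i ≤ ⨅ j, f j := by
    rw [hm]
    exact le_trans (by exact_mod_cast hmn) hn1
  exact ⟨Or.inr ⟨m, le_antisymm (le_trans (iInf_le f i) hm.le) (hm ▸ hle)⟩, ⟨i, hle⟩⟩

end SPA
namespace SPA
open Arena

variable {V : Type}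

lemma fin2 (i : Fin 2) : i = 0 ∨ i = 1 := by revert i; decide

noncomputable def dflt (A : Arena V 2) (v : V) : V := (A.no_deadlock v).choose
lemma dflt_spec (A : Arena V 2) (v : V) : A.E v (dflt A v) := (A.no_deadlock v).choose_spec

noncomputable instance (A : Arena V 2) : Nonempty A.Strategy :=
  ⟨⟨fun _ v => dflt A v, fun _ v => dflt_spec A v⟩⟩

lemma pref_zero (π : ℕ → V) : pref π 0 = [] := rfl

lemma pref_succ (π : ℕ → V) (j : ℕ) : pref π (j + 1) = pref π j ++ [π j] := by
  simp [pref, List.range_succ]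

lemma pref_length (π : ℕ → V) (j : ℕ) : (pref π j).length = j := by simp [pref]

lemma pref_congr {π π' : ℕ → V} (k : ℕ) (h : ∀ j, j ≤ k → π j = π' j) :
    ∀ j, j ≤ k → pref π j = pref π' j := by
  intro j hj
  simp only [pref]
  refine List.map_congr_left fun m hm => ?_
  exact h m (le_of_lt (lt_of_lt_of_le (List.mem_range.mp hm) hj))

lemma outcomeAux_succ (A : Arena V 2) (σ : Fin 2 → A.Strategy) (v : V) (j : ℕ) :
    outcomeAux A σ v (j + 1) =
      ((outcomeAux A σ v j).1 ++ [(outcomeAux A σ v j).2],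
        (σ (A.owner (outcomeAux A σ v j).2)).next (outcomeAux A σ v j).1
          (outcomeAux A σ v j).2) := rfl

lemma outcome_zero (A : Arena V 2) (σ : Fin 2 → A.Strategy) (v : V) :
    outcome A σ v 0 = v := rfl

lemma outcomeAux_fst (A : Arena V 2) (σ : Fin 2 → A.Strategy) (v : V) (j : ℕ) :
    (outcomeAux A σ v j).1 = pref (outcome A σ v) j := by
  induction j with
  | zero => rfl
  | succ j ih => rw [outcomeAux_succ, pref_succ, ih]; rfl

lemma outcome_succ (A : Arena V 2) (σ : Fin 2 → A.Strategy) (v : V) (j : ℕ) :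
    outcome A σ v (j + 1) =
      (σ (A.owner (outcome A σ v j))).next (pref (outcome A σ v) j) (outcome A σ v j) := by
  rw [outcome, outcomeAux_succ, ← outcomeAux_fst]; rfl

lemma outcome_isPlay (A : Arena V 2) (σ : Fin 2 → A.Strategy) (v : V) :
    A.IsPlay (outcome A σ v) := by
  intro j
  rw [outcome_succ]
  exact (σ _).valid _ _

/-- A tracking strategy for player 2 which follows the play `π`. -/
noncomputable def track (A : Arena V 2) (π : ℕ → V) : A.Strategy where
  next h x := if A.E x (π (h.length + 1)) ∧ x = π h.length then π (h.length + 1) else dflt A x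
  valid h x := by
    split_ifs with hh
    · exact hh.1
    · exact dflt_spec A x

lemma track_outcomeAux (A : Arena V 2) (σ1 : A.Strategy) (π : ℕ → V)
    (hp : A.IsPlay π) (hc : A.Consistent 0 σ1 π) (j : ℕ) :
    outcomeAux A ![σ1, track A π] (π 0) j = (pref π j, π j) := by
  induction j with
  | zero => rfl
  | succ j ih =>
      rw [outcomeAux_succ, ih, pref_succ]
      refine Prod.ext rfl ?_
      rcases fin2 (A.owner (π j)) with h | h
      · rw [h]
        simp only [Matrix.cons_val_zero]
        exact (hc j h).symm
      · rw [h]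
        simp only [Matrix.cons_val_one, Matrix.head_cons, Matrix.cons_val_zero, track]
        rw [pref_length, if_pos (And.intro (hp j) rfl)]

/-- Every play consistent with `σ1` is the outcome against some `σ2`. -/
lemma exists_sigma2 (A : Arena V 2) (σ1 : A.Strategy) (π : ℕ → V)
    (hp : A.IsPlay π) (hc : A.Consistent 0 σ1 π) :
    ∃ σ2 : A.Strategy, outcome A ![σ1, σ2] (π 0) = π := by
  exact ⟨track A π, funext fun j => by rw [outcome, track_outcomeAux A σ1 π hp hc]⟩

end SPA
namespace SPA
open Arena

variable {V : Type}

/-- Strategy with history prefixed by `p`. -/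
noncomputable def shiftStrat (A : Arena V 2) (σ : A.Strategy) (p : List V) : A.Strategy where
  next h x := σ.next (p ++ h) x
  valid h x := σ.valid _ _

noncomputable def shiftTrack (A : Arena V 2) (π : ℕ → V) (k : ℕ) (σ2' : A.Strategy) :
    A.Strategy where
  next h x := if h.length < k then
      (if A.E x (π (h.length + 1)) ∧ x = π h.length then π (h.length + 1) else dflt A x)
    else σ2'.next (h.drop k) x
  valid h x := by
    split_ifs with h1 h2
    · exact h2.1
    · exact dflt_spec A x
    · exact σ2'.valid _ _

lemma shiftk_aux1 (A : Arena V 2) (σ1 : A.Strategy) (π : ℕ → V) (k : ℕ)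
    (hplay : ∀ j, j < k → A.E (π j) (π (j + 1)))
    (hcons : ∀ j, j < k → A.owner (π j) = 0 → π (j + 1) = σ1.next (pref π j) (π j))
    (σ2' : A.Strategy) :
    ∀ j, j ≤ k → outcomeAux A ![σ1, shiftTrack A π k σ2'] (π 0) j = (pref π j, π j) := by
  intro j
  induction j with
  | zero => intro _; rfl
  | succ j ih =>
      intro hj
      have hjk : j < k := hj
      rw [outcomeAux_succ, ih (le_of_lt hjk), pref_succ]
      refine Prod.ext rfl ?_
      rcases fin2 (A.owner (π j)) with h | h
      · rw [h]; simp only [Matrix.cons_val_zero]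
        exact (hcons j hjk h).symm
      · rw [h]; simp only [Matrix.cons_val_one, Matrix.head_cons, Matrix.cons_val_zero, shiftTrack]
        rw [pref_length, if_pos hjk, if_pos (And.intro (hplay j hjk) rfl)]

lemma shiftk_aux2 (A : Arena V 2) (σ1 : A.Strategy) (π : ℕ → V) (k : ℕ)
    (hplay : ∀ j, j < k → A.E (π j) (π (j + 1)))
    (hcons : ∀ j, j < k → A.owner (π j) = 0 → π (j + 1) = σ1.next (pref π j) (π j))
    (σ2' : A.Strategy) :
    ∀ m, outcomeAux A ![σ1, shiftTrack A π k σ2'] (π 0) (k + m)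
      = (pref π k ++ (outcomeAux A ![shiftStrat A σ1 (pref π k), σ2'] (π k) m).1,
         (outcomeAux A ![shiftStrat A σ1 (pref π k), σ2'] (π k) m).2) := by
  intro m
  induction m with
  | zero =>
      rw [Nat.add_zero, shiftk_aux1 A σ1 π k hplay hcons σ2' k le_rfl]
      simp [outcomeAux]
  | succ m ih =>
      rw [show k + (m + 1) = (k + m) + 1 from rfl, outcomeAux_succ, ih, outcomeAux_succ]
      set q := outcomeAux A ![shiftStrat A σ1 (pref π k), σ2'] (π k) m with hq
      refine Prod.ext ?_ ?_
      · simp [List.append_assoc]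
      · dsimp only
        rcases fin2 (A.owner q.2) with h | h
        · rw [h]; simp only [Matrix.cons_val_zero]; rfl
        · rw [h]; simp only [Matrix.cons_val_one, Matrix.head_cons, Matrix.cons_val_zero, shiftTrack]
          have hlen : (pref π k ++ q.1).length = k + q.1.length := by
            simp [pref_length]
          have hdrop : (pref π k ++ q.1).drop k = q.1 := by
            have := List.drop_left (l₁ := pref π k) (l₂ := q.1)
            rwa [pref_length] at this
          rw [hlen, if_neg (by omega), hdrop]

lemma shiftk (A : Arena V 2) (σ1 : A.Strategy) (π : ℕ → V) (k : ℕ)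
    (hplay : ∀ j, j < k → A.E (π j) (π (j + 1)))
    (hcons : ∀ j, j < k → A.owner (π j) = 0 → π (j + 1) = σ1.next (pref π j) (π j))
    (σ2' : A.Strategy) :
    ∃ σ2 : A.Strategy, (∀ j, j ≤ k → outcome A ![σ1, σ2] (π 0) j = π j) ∧
      ∀ m, outcome A ![σ1, σ2] (π 0) (k + m)
        = outcome A ![shiftStrat A σ1 (pref π k), σ2'] (π k) m := by
  refine ⟨shiftTrack A π k σ2', fun j hj => ?_, fun m => ?_⟩
  · rw [outcome, shiftk_aux1 A σ1 π k hplay hcons σ2' j hj]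
  · rw [outcome, shiftk_aux2 A σ1 π k hplay hcons σ2' m, outcome]

end SPA
namespace SPA
open Arena

variable {V : Type} (w : V → V → ℕ) (T : Set V)

lemma spCost_def (π : ℕ → V) : spCost w T π =
    (if ∃ k, π k ∈ T then
      (Finset.range (sInf {k | π k ∈ T})).sum fun j => (w (π j) (π (j + 1)) : ℝ≥0∞)
    else ⊤) := rfl

lemma spCost_natinf (π : ℕ → V) : NatInf (spCost w T π) := by
  rw [spCost_def]
  split_ifs
  · right; exact ⟨_, (Nat.cast_sum _ _).symm⟩
  · left; rfl

lemma spCost_zero_of_mem (π : ℕ → V) (h : π 0 ∈ T) : spCost w T π = 0 := by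
  rw [spCost_def, if_pos ⟨0, h⟩]
  have h0 : sInf {k | π k ∈ T} = 0 := Nat.sInf_eq_zero.mpr (Or.inl h)
  rw [h0]; simp

lemma spCost_le_sum (π : ℕ → V) (k : ℕ) (h : π k ∈ T) :
    spCost w T π ≤ ∑ j ∈ Finset.range k, (w (π j) (π (j + 1)) : ℝ≥0∞) := by
  rw [spCost_def, if_pos ⟨k, h⟩]
  exact Finset.sum_le_sum_of_subset (Finset.range_subset_range.mpr (Nat.sInf_le h))

lemma spCost_shift (π : ℕ → V) (h0 : π 0 ∉ T) :
    spCost w T π = (w (π 0) (π 1) : ℝ≥0∞) + spCost w T (fun m => π (m + 1)) := by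
  by_cases hS : ∃ k, π k ∈ T
  · have hS' : ∃ k, π (k + 1) ∈ T := by
      obtain ⟨k, hk⟩ := hS
      cases k with
      | zero => exact absurd hk h0
      | succ k => exact ⟨k, hk⟩
    have hb : sInf {k | π k ∈ T} ∈ {k | π k ∈ T} := Nat.sInf_mem hS
    have h1 : sInf {k | π k ∈ T} = sInf {k | π (k + 1) ∈ T} + 1 := by
      have ha : sInf {k | π (k + 1) ∈ T} ∈ {k | π (k + 1) ∈ T} := Nat.sInf_mem hS'
      refine le_antisymm (Nat.sInf_le ha) ?_
      have hne : sInf {k | π k ∈ T} ≠ 0 := fun hz => h0 (by rwa [hz] at hb)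
      obtain ⟨t, ht⟩ := Nat.exists_eq_succ_of_ne_zero hne
      have h2 : sInf {k | π (k + 1) ∈ T} ≤ t := Nat.sInf_le (by rw [Set.mem_setOf_eq]; rw [Nat.succ_eq_add_one] at ht; rw [← ht]; exact hb)
      omega
    rw [spCost_def, spCost_def, if_pos hS, if_pos hS', h1, Finset.sum_range_succ', add_comm]
  · have hS' : ¬ ∃ k, π (k + 1) ∈ T := fun ⟨k, hk⟩ => hS ⟨k + 1, hk⟩
    rw [spCost_def, spCost_def, if_neg hS, if_neg hS']
    simp

lemma spCost_prefix (π : ℕ → V) (k : ℕ) (h : ∀ j, j < k → π j ∉ T) :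
    spCost w T π = (∑ j ∈ Finset.range k, (w (π j) (π (j + 1)) : ℝ≥0∞))
      + spCost w T (fun m => π (m + k)) := by
  induction k with
  | zero =>
      have he : (fun m => π (m + 0)) = π := funext fun m => by rw [Nat.add_zero]
      rw [he]; simp
  | succ k ih =>
      rw [ih (fun j hj => h j (lt_trans hj (Nat.lt_succ_self k)))]
      have h2 : spCost w T (fun m => π (m + k))
          = (w (π k) (π (k + 1)) : ℝ≥0∞) + spCost w T (fun m => π (m + (k + 1))) := by
        have h3 := spCost_shift w T (fun m => π (m + k))
          (by simpa using h k (Nat.lt_succ_self k))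
        simp only [Nat.zero_add] at h3
        have h4 : (fun m => π (m + 1 + k)) = (fun m => π (m + (k + 1))) :=
          funext fun m => by rw [show m + 1 + k = m + (k + 1) by omega]
        rw [h3]
        congr 1
        · rw [Nat.add_comm 1 k]
        · exact congrArg _ h4
      rw [h2, ← add_assoc, Finset.sum_range_succ]

end SPA
namespace SPA
open Arena

variable {V : Type} (w : V → V → ℕ) (T : Set V) (A : Arena V 2)

lemma valIS_def (v : V) : valIS A (spCost w T) v
    = ⨅ σ1 : A.Strategy, ⨆ σ2 : A.Strategy, spCost w T (outcome A ![σ1, σ2] v) := rfl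

lemma val_natinf (v : V) : NatInf (valIS A (spCost w T) v) := by
  rw [valIS_def]
  exact (natinf_iInf_attained fun σ1 => natinf_iSup fun σ2 => spCost_natinf w T _).1

lemma val_attained (v : V) : ∃ σ1 : A.Strategy,
    (⨆ σ2 : A.Strategy, spCost w T (outcome A ![σ1, σ2] v)) ≤ valIS A (spCost w T) v := by
  rw [valIS_def]
  exact (natinf_iInf_attained fun σ1 => natinf_iSup fun σ2 => spCost_natinf w T _).2

/-- Fundamental lower bound on `sup_{σ₂}` along a finite history consistent with `σ₁`. -/
lemma sup_ge (σ1 : A.Strategy) (π : ℕ → V) (k : ℕ)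
    (hplay : ∀ j, j < k → A.E (π j) (π (j + 1)))
    (hcons : ∀ j, j < k → A.owner (π j) = 0 → π (j + 1) = σ1.next (pref π j) (π j))
    (hT : ∀ j, j < k → π j ∉ T) :
    (∑ j ∈ Finset.range k, (w (π j) (π (j + 1)) : ℝ≥0∞)) + valIS A (spCost w T) (π k)
      ≤ ⨆ σ2 : A.Strategy, spCost w T (outcome A ![σ1, σ2] (π 0)) := by
  have key : ∀ σ2' : A.Strategy,
      (∑ j ∈ Finset.range k, (w (π j) (π (j + 1)) : ℝ≥0∞))
        + spCost w T (outcome A ![shiftStrat A σ1 (pref π k), σ2'] (π k))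
      ≤ ⨆ σ2 : A.Strategy, spCost w T (outcome A ![σ1, σ2] (π 0)) := by
    intro σ2'
    obtain ⟨σ2, h1, h2⟩ := shiftk A σ1 π k hplay hcons σ2'
    have hdec : spCost w T (outcome A ![σ1, σ2] (π 0))
        = (∑ j ∈ Finset.range k, (w (π j) (π (j + 1)) : ℝ≥0∞))
          + spCost w T (outcome A ![shiftStrat A σ1 (pref π k), σ2'] (π k)) := by
      rw [spCost_prefix w T _ k (fun j hj => by rw [h1 j (le_of_lt hj)]; exact hT j hj)]
      congr 1
      · refine Finset.sum_congr rfl fun j hj => ?_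
        have hj' := Finset.mem_range.mp hj
        rw [h1 j (le_of_lt hj'), h1 (j + 1) hj']
      · refine congrArg _ (funext fun m => ?_)
        rw [show m + k = k + m from Nat.add_comm m k, h2 m]
    rw [← hdec]
    exact le_iSup (fun σ2 => spCost w T (outcome A ![σ1, σ2] (π 0))) σ2
  have hval : valIS A (spCost w T) (π k)
      ≤ ⨆ σ2' : A.Strategy, spCost w T (outcome A ![shiftStrat A σ1 (pref π k), σ2'] (π k)) := by
    rw [valIS_def]
    exact iInf_le _ _
  calc (∑ j ∈ Finset.range k, (w (π j) (π (j + 1)) : ℝ≥0∞)) + valIS A (spCost w T) (π k)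
      ≤ (∑ j ∈ Finset.range k, (w (π j) (π (j + 1)) : ℝ≥0∞))
        + ⨆ σ2' : A.Strategy, spCost w T (outcome A ![shiftStrat A σ1 (pref π k), σ2'] (π k)) :=
        add_le_add_right hval _
    _ = ⨆ σ2' : A.Strategy, ((∑ j ∈ Finset.range k, (w (π j) (π (j + 1)) : ℝ≥0∞))
        + spCost w T (outcome A ![shiftStrat A σ1 (pref π k), σ2'] (π k))) := ENNReal.add_iSup _
    _ ≤ _ := iSup_le key

/-- One-step path from `v` to `u`. -/
def twoStep (v u : V) : ℕ → V := fun j => if j = 0 then v else u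

lemma sup_ge_one (σ1 : A.Strategy) (v u : V) (hE : A.E v u) (hT : v ∉ T)
    (hcons : A.owner v = 0 → u = σ1.next [] v) :
    (w v u : ℝ≥0∞) + valIS A (spCost w T) u
      ≤ ⨆ σ2 : A.Strategy, spCost w T (outcome A ![σ1, σ2] v) := by
  have h := sup_ge w T A σ1 (twoStep v u) 1
    (fun j hj => by
      have : j = 0 := by omega
      subst this; simpa [twoStep] using hE)
    (fun j hj ho => by
      have : j = 0 := by omega
      subst this
      simp only [twoStep, if_pos rfl] at ho
      have := hcons ho
      simp [twoStep, pref_zero, this])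
    (fun j hj => by
      have : j = 0 := by omega
      subst this; simpa [twoStep] using hT)
  simpa [twoStep] using h

lemma bellman2 (v u : V) (ho : A.owner v = 1) (hT : v ∉ T) (hE : A.E v u) :
    (w v u : ℝ≥0∞) + valIS A (spCost w T) u ≤ valIS A (spCost w T) v := by
  rw [valIS_def]
  refine le_iInf fun σ1 => ?_
  exact sup_ge_one w T A σ1 v u hE hT (fun h0 => absurd (h0 ▸ ho) (by decide))

lemma bellman1 (v : V) (ho : A.owner v = 0) (hT : v ∉ T) :
    ∃ u, A.E v u ∧ (w v u : ℝ≥0∞) + valIS A (spCost w T) u ≤ valIS A (spCost w T) v := by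
  by_cases hv : valIS A (spCost w T) v = ⊤
  · exact ⟨dflt A v, dflt_spec A v, hv ▸ le_top⟩
  by_contra hcon
  push_neg at hcon
  have hstep : ∀ σ1 : A.Strategy, valIS A (spCost w T) v + 1
      ≤ ⨆ σ2 : A.Strategy, spCost w T (outcome A ![σ1, σ2] v) := by
    intro σ1
    set u := σ1.next [] v with hu
    have hE : A.E v u := σ1.valid [] v
    have h1 : valIS A (spCost w T) v < (w v u : ℝ≥0∞) + valIS A (spCost w T) u :=
      hcon u hE
    have h2 : valIS A (spCost w T) v + 1 ≤ (w v u : ℝ≥0∞) + valIS A (spCost w T) u :=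
      natinf_succ_le (val_natinf w T A v) (natinf_add_nat _ (val_natinf w T A u)) h1
    exact le_trans h2 (sup_ge_one w T A σ1 v u hE hT (fun _ => rfl))
  have hfin : valIS A (spCost w T) v + 1 ≤ valIS A (spCost w T) v := by
    rw [valIS_def]
    exact le_iInf hstep
  have : valIS A (spCost w T) v < valIS A (spCost w T) v + 1 :=
    ENNReal.lt_add_right hv one_ne_zero
  exact absurd (lt_of_lt_of_le this hfin) (lt_irrefl _)

end SPA
namespace SPA
open Arena

variable {V : Type}

/-- One attractor step, on domain `D`, with player-0 edges restricted by `Good`. -/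
def step (A : Arena V 2) (T : Set V) (D : Set V) (Good : V → V → Prop) (S : Set V) :
    Set V :=
  {v | v ∈ D ∧ (v ∈ T ∨
    (A.owner v = 0 ∧ ∃ u, A.E v u ∧ Good v u ∧ u ∈ S) ∨
    (A.owner v = 1 ∧ ∀ u, A.E v u → u ∈ S))}

/-- Transfinite attractor. -/
noncomputable def att (A : Arena V 2) (T : Set V) (D : Set V) (Good : V → V → Prop)
    (α : Ordinal.{0}) : Set V :=
  step A T D Good {x | ∃ β, ∃ _ : β < α, x ∈ att A T D Good β}
termination_by α
decreasing_by assumption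

lemma att_eq (A : Arena V 2) (T : Set V) (D : Set V) (Good : V → V → Prop)
    (α : Ordinal.{0}) :
    att A T D Good α = step A T D Good {x | ∃ β, ∃ _ : β < α, x ∈ att A T D Good β} := by
  rw [att]

/-- Full attractor. -/
def attU (A : Arena V 2) (T : Set V) (D : Set V) (Good : V → V → Prop) : Set V :=
  {v | ∃ α, v ∈ att A T D Good α}

noncomputable def rank (A : Arena V 2) (T : Set V) (D : Set V) (Good : V → V → Prop)
    (v : V) : Ordinal.{0} :=
  sInf {α | v ∈ att A T D Good α}

lemma mem_att_rank {A : Arena V 2} {T D : Set V} {Good : V → V → Prop} {v : V}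
    (h : v ∈ attU A T D Good) : v ∈ att A T D Good (rank A T D Good v) :=
  csInf_mem h

lemma rank_le {A : Arena V 2} {T D : Set V} {Good : V → V → Prop} {v : V} {α : Ordinal}
    (h : v ∈ att A T D Good α) : rank A T D Good v ≤ α :=
  csInf_le' h

lemma att_subset_D {A : Arena V 2} {T D : Set V} {Good : V → V → Prop} {α : Ordinal}
    {v : V} (h : v ∈ att A T D Good α) : v ∈ D := by
  rw [att_eq] at h; exact h.1

lemma ord_lt_add_one (a : Ordinal.{0}) : a < a + 1 := by
  rw [Ordinal.add_one_eq_succ]; exact Order.lt_succ a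

lemma mem_attU_of_T {A : Arena V 2} {T D : Set V} {Good : V → V → Prop} {v : V}
    (hD : v ∈ D) (hT : v ∈ T) : v ∈ attU A T D Good :=
  ⟨0, by rw [att_eq]; exact ⟨hD, Or.inl hT⟩⟩

lemma mem_attU_of_p0 {A : Arena V 2} {T D : Set V} {Good : V → V → Prop} {v u : V}
    (hD : v ∈ D) (ho : A.owner v = 0) (hE : A.E v u) (hG : Good v u)
    (hu : u ∈ attU A T D Good) : v ∈ attU A T D Good := by
  refine ⟨rank A T D Good u + 1, ?_⟩
  rw [att_eq]
  refine ⟨hD, Or.inr (Or.inl ⟨ho, u, hE, hG, ?_⟩)⟩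
  exact ⟨rank A T D Good u, ord_lt_add_one _, mem_att_rank hu⟩

lemma mem_attU_of_p1 {A : Arena V 2} {T D : Set V} {Good : V → V → Prop} {v : V}
    (hD : v ∈ D) (ho : A.owner v = 1) (hall : ∀ u, A.E v u → u ∈ attU A T D Good) :
    v ∈ attU A T D Good := by
  refine ⟨(⨆ u : {u // A.E v u}, rank A T D Good u) + 1, ?_⟩
  rw [att_eq]
  refine ⟨hD, Or.inr (Or.inr ⟨ho, fun u hE => ?_⟩)⟩
  refine ⟨rank A T D Good u, ?_, mem_att_rank (hall u hE)⟩
  have h1 : rank A T D Good u ≤ ⨆ u : {u // A.E v u}, rank A T D Good u :=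
    le_ciSup (Ordinal.bddAbove_range _) (⟨u, hE⟩ : {u // A.E v u})
  exact lt_of_le_of_lt h1 (ord_lt_add_one _)

end SPA
namespace SPA
open Arena

variable {V : Type}

/-- A play driven by `σ1` at player-0 vertices and by the memoryless `g` elsewhere. -/
noncomputable def pilotAux (A : Arena V 2) (σ1 : A.Strategy) (g : V → V) (v : V) :
    ℕ → List V × V
  | 0 => ([], v)
  | j + 1 =>
      let p := pilotAux A σ1 g v j
      (p.1 ++ [p.2], if A.owner p.2 = 0 then σ1.next p.1 p.2 else g p.2)

noncomputable def pilot (A : Arena V 2) (σ1 : A.Strategy) (g : V → V) (v : V) (j : ℕ) : V :=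
  (pilotAux A σ1 g v j).2

lemma pilot_zero (A : Arena V 2) (σ1 : A.Strategy) (g : V → V) (v : V) :
    pilot A σ1 g v 0 = v := rfl

lemma pilotAux_fst (A : Arena V 2) (σ1 : A.Strategy) (g : V → V) (v : V) (j : ℕ) :
    (pilotAux A σ1 g v j).1 = pref (pilot A σ1 g v) j := by
  induction j with
  | zero => rfl
  | succ j ih =>
      show (pilotAux A σ1 g v j).1 ++ [(pilotAux A σ1 g v j).2] = _
      rw [pref_succ, ih]; rfl

lemma pilot_succ (A : Arena V 2) (σ1 : A.Strategy) (g : V → V) (v : V) (j : ℕ) :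
    pilot A σ1 g v (j + 1) =
      if A.owner (pilot A σ1 g v j) = 0 then
        σ1.next (pref (pilot A σ1 g v) j) (pilot A σ1 g v j)
      else g (pilot A σ1 g v j) := by
  show (if A.owner (pilotAux A σ1 g v j).2 = 0 then
      σ1.next (pilotAux A σ1 g v j).1 (pilotAux A σ1 g v j).2
    else g (pilotAux A σ1 g v j).2) = _
  rw [pilotAux_fst]; rfl

lemma pilot_isPlay (A : Arena V 2) (σ1 : A.Strategy) (g : V → V)
    (hg : ∀ x, A.E x (g x)) (v : V) : A.IsPlay (pilot A σ1 g v) := by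
  intro j
  rw [pilot_succ]
  split_ifs
  · exact σ1.valid _ _
  · exact hg _

lemma pilot_cons (A : Arena V 2) (σ1 : A.Strategy) (g : V → V) (v : V) :
    A.Consistent 0 σ1 (pilot A σ1 g v) := by
  intro j hj
  rw [pilot_succ, if_pos hj]

/-- The reachability winning region is contained in the full attractor of `T`. -/
lemma win_subset_attR (A : Arena V 2) (T : Set V) (v : V)
    (hv : v ∈ WinRegion A 0 (ReachObj T)) :
    v ∈ attU A T Set.univ (fun _ _ => True) := by
  by_contra hvn
  obtain ⟨σ, hσ⟩ := hv
  classical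
  set AR := attU A T Set.univ (fun _ _ => True) with hAR
  set g : V → V := fun x =>
    if h : ∃ u, A.E x u ∧ u ∉ AR then h.choose else dflt A x with hgdef
  have hg : ∀ x, A.E x (g x) := by
    intro x
    rw [hgdef]
    dsimp only
    split_ifs with h
    · exact h.choose_spec.1
    · exact dflt_spec A x
  set π := pilot A σ g v with hπ
  have hinv : ∀ j, π j ∉ AR := by
    intro j
    induction j with
    | zero => exact hvn
    | succ j ih =>
        rw [hπ, pilot_succ, ← hπ]
        rcases fin2 (A.owner (π j)) with ho | ho
        · rw [if_pos ho]
          intro hmem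
          exact ih (mem_attU_of_p0 (Set.mem_univ _) ho (σ.valid _ _) trivial hmem)
        · rw [if_neg (by rw [ho]; decide)]
          have hex : ∃ u, A.E (π j) u ∧ u ∉ AR := by
            by_contra hno
            push_neg at hno
            exact ih (mem_attU_of_p1 (Set.mem_univ _) ho fun u hE => hno u hE)
          rw [hgdef]
          dsimp only
          rw [dif_pos hex]
          exact hex.choose_spec.2
  have hreach : ∃ j, π j ∈ T :=
    hσ π (pilot_isPlay A σ g hg v) (pilot_zero A σ g v) (pilot_cons A σ g v)
  obtain ⟨j, hj⟩ := hreach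
  exact hinv j (mem_attU_of_T (Set.mem_univ _) hj)

end SPA
namespace SPA
open Arena

variable {V : Type}

/-- Allowed (value-optimal) player-0 edges. -/
def GoodO (w : V → V → ℕ) (T : Set V) (A : Arena V 2) (v u : V) : Prop :=
  (w v u : ℝ≥0∞) + valIS A (spCost w T) u ≤ valIS A (spCost w T) v

/-- Vertices with finite value. -/
def Fdom (w : V → V → ℕ) (T : Set V) (A : Arena V 2) : Set V :=
  {v | valIS A (spCost w T) v < ⊤}

/-- Every finite-value vertex lies in the attractor along optimal edges. -/
lemma F_subset_attV (w : V → V → ℕ) (T : Set V) (A : Arena V 2) :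
    ∀ v, valIS A (spCost w T) v < ⊤ →
      v ∈ attU A T (Fdom w T A) (GoodO w T A) := by
  by_contra hcon
  push_neg at hcon
  obtain ⟨v1, hv1F, hv1n⟩ := hcon
  classical
  set AV := attU A T (Fdom w T A) (GoodO w T A) with hAV
  set X : Set V := {x | valIS A (spCost w T) x < ⊤ ∧ x ∉ AV} with hX
  have hNS : ({n : ℕ | ∃ x ∈ X, valIS A (spCost w T) x = (n : ℝ≥0∞)}).Nonempty := by
    rcases val_natinf w T A v1 with h | ⟨n, hn⟩
    · exact absurd h (ne_of_lt hv1F)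
    · exact ⟨n, v1, ⟨hv1F, hv1n⟩, hn⟩
  set c := sInf {n : ℕ | ∃ x ∈ X, valIS A (spCost w T) x = (n : ℝ≥0∞)} with hc
  obtain ⟨x0, hx0X, hx0val⟩ := Nat.sInf_mem hNS
  have hmin : ∀ x ∈ X, (c : ℝ≥0∞) ≤ valIS A (spCost w T) x := by
    intro x hx
    rcases val_natinf w T A x with h | ⟨n, hn⟩
    · rw [h]; exact le_top
    · rw [hn]
      have hle : c ≤ n := Nat.sInf_le (show n ∈ _ from ⟨x, hx, hn⟩)
      exact_mod_cast hle
  have hXT : ∀ x ∈ X, x ∉ T := fun x hx hxT => hx.2 (mem_attU_of_T hx.1 hxT)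
  have hX1 : ∀ x ∈ X, A.owner x = 1 → ∃ u, A.E x u ∧ u ∈ X := by
    intro x hx ho
    by_contra hno
    push_neg at hno
    refine hx.2 (mem_attU_of_p1 hx.1 ho fun u hE => ?_)
    have huF : valIS A (spCost w T) u < ⊤ := by
      have hb := bellman2 w T A x u ho (hXT x hx) hE
      exact lt_of_le_of_lt (le_trans le_add_self hb) hx.1
    by_contra hun
    exact hno u hE ⟨huF, hun⟩
  -- main claim: c + 1 ≤ sup over σ2, for every σ1
  have hclaim : ∀ σ1 : A.Strategy,
      (c : ℝ≥0∞) + 1 ≤ ⨆ σ2 : A.Strategy, spCost w T (outcome A ![σ1, σ2] x0) := by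
    intro σ1
    set g : V → V := fun x =>
      if h : ∃ u, A.E x u ∧ u ∈ X then h.choose else dflt A x with hgdef
    have hg : ∀ x, A.E x (g x) := by
      intro x
      rw [hgdef]; dsimp only
      split_ifs with h
      · exact h.choose_spec.1
      · exact dflt_spec A x
    set π := pilot A σ1 g x0 with hπ
    have hplay : A.IsPlay π := pilot_isPlay A σ1 g hg x0
    have hconsist : A.Consistent 0 σ1 π := pilot_cons A σ1 g x0
    by_cases hall : ∀ j, π j ∈ X
    · -- π stays in X forever, so it never reaches T and has cost ⊤
      obtain ⟨σ2, hσ2⟩ := exists_sigma2 A σ1 π hplay hconsist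
      have htop : spCost w T π = ⊤ := by
        rw [spCost_def, if_neg]
        rintro ⟨k, hk⟩
        exact hXT _ (hall k) hk
      refine le_trans le_top (le_iSup_of_le σ2 ?_)
      rw [show (π 0) = x0 from rfl] at hσ2
      rw [hσ2, htop]
    · push_neg at hall
      have hex : ∃ j, π j ∉ X := hall
      set k := Nat.find hex with hk
      have hkX : π k ∉ X := Nat.find_spec hex
      have hlt : ∀ j, j < k → π j ∈ X := fun j hj => by
        by_contra hj'
        exact Nat.find_min hex hj hj'
      have hk0 : k ≠ 0 := fun h => hkX (h ▸ hx0X)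
      obtain ⟨kk, hkk⟩ : ∃ kk, k = kk + 1 := ⟨k - 1, by omega⟩
      have hxX : π kk ∈ X := hlt kk (by omega)
      have huX : π (kk + 1) ∉ X := hkk ▸ hkX
      have ho0 : A.owner (π kk) = 0 := by
        rcases fin2 (A.owner (π kk)) with h | h
        · exact h
        · exfalso
          have hstep : π (kk + 1) = g (π kk) := by
            rw [hπ, pilot_succ, ← hπ, if_neg (by rw [h]; decide)]
          obtain ⟨u', hu'E, hu'X⟩ := hX1 _ hxX h
          have : g (π kk) ∈ X := by
            rw [hgdef]; dsimp only
            rw [dif_pos ⟨u', hu'E, hu'X⟩]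
            exact (Exists.choose_spec (⟨u', hu'E, hu'X⟩ : ∃ u, A.E (π kk) u ∧ u ∈ X)).2
          exact huX (hstep ▸ this)
      have hE : A.E (π kk) (π (kk + 1)) := hplay kk
      have hkey : (c : ℝ≥0∞) + 1
          ≤ (w (π kk) (π (kk + 1)) : ℝ≥0∞) + valIS A (spCost w T) (π (kk + 1)) := by
        by_cases hu : valIS A (spCost w T) (π (kk + 1)) = ⊤
        · rw [hu, ENNReal.add_eq_top.mpr (Or.inr rfl)]
          exact le_top
        · have huA : π (kk + 1) ∈ AV := by
            by_contra hun
            exact huX ⟨lt_top_iff_ne_top.mpr hu, hun⟩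
          have hnotgood : ¬ GoodO w T A (π kk) (π (kk + 1)) := by
            intro hgood
            exact hxX.2 (mem_attU_of_p0 hxX.1 ho0 hE hgood huA)
          have h1 : valIS A (spCost w T) (π kk)
              < (w (π kk) (π (kk + 1)) : ℝ≥0∞) + valIS A (spCost w T) (π (kk + 1)) :=
            not_le.mp hnotgood
          have h2 := natinf_succ_le (val_natinf w T A (π kk))
            (natinf_add_nat _ (val_natinf w T A (π (kk + 1)))) h1
          exact le_trans (add_le_add_left (hmin _ hxX) 1) h2
      have hsup := sup_ge w T A σ1 π (kk + 1)
        (fun j _ => hplay j)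
        (fun j _ hj0 => hconsist j hj0)
        (fun j hj => hXT _ (hlt j (hkk ▸ hj)))
      have hterm : (w (π kk) (π (kk + 1)) : ℝ≥0∞)
          ≤ ∑ j ∈ Finset.range (kk + 1), (w (π j) (π (j + 1)) : ℝ≥0∞) :=
        Finset.single_le_sum (f := fun j => (w (π j) (π (j + 1)) : ℝ≥0∞))
          (fun _ _ => zero_le) (Finset.self_mem_range_succ kk)
      refine le_trans ?_ hsup
      exact le_trans hkey (add_le_add_left hterm _)
  have hge : (c : ℝ≥0∞) + 1 ≤ valIS A (spCost w T) x0 := by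
    rw [valIS_def]
    exact le_iInf hclaim
  rw [hx0val] at hge
  have hlt' : (c : ℝ≥0∞) < (c : ℝ≥0∞) + 1 :=
    ENNReal.lt_add_right (ENNReal.natCast_ne_top c) one_ne_zero
  exact absurd hge (not_le.mpr hlt')

end SPA
namespace SPA
open Arena

variable {V : Type}

lemma exists_optstep (w : V → V → ℕ) (T : Set V) (A : Arena V 2) (v : V)
    (hT : v ∉ T) (ho : A.owner v = 0)
    (hv : v ∈ attU A T (Fdom w T A) (GoodO w T A)) :
    ∃ u, A.E v u ∧ GoodO w T A v u
      ∧ rank A T (Fdom w T A) (GoodO w T A) u < rank A T (Fdom w T A) (GoodO w T A) v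
      ∧ u ∈ attU A T (Fdom w T A) (GoodO w T A) := by
  have h := mem_att_rank hv
  rw [att_eq] at h
  rcases h.2 with h1 | h2 | h3
  · exact absurd h1 hT
  · obtain ⟨_, u, hE, hG, β, hβ, hu⟩ := h2
    exact ⟨u, hE, hG, lt_of_le_of_lt (rank_le hu) hβ, ⟨β, hu⟩⟩
  · rw [ho] at h3
    exact absurd h3.1 (by decide)

lemma exists_rstep (A : Arena V 2) (T : Set V) (v : V)
    (hT : v ∉ T) (ho : A.owner v = 0)
    (hv : v ∈ attU A T Set.univ (fun _ _ => True)) :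
    ∃ u, A.E v u
      ∧ rank A T Set.univ (fun _ _ => True) u < rank A T Set.univ (fun _ _ => True) v
      ∧ u ∈ attU A T Set.univ (fun _ _ => True) := by
  have h := mem_att_rank hv
  rw [att_eq] at h
  rcases h.2 with h1 | h2 | h3
  · exact absurd h1 hT
  · obtain ⟨_, u, hE, _, β, hβ, hu⟩ := h2
    exact ⟨u, hE, lt_of_le_of_lt (rank_le hu) hβ, ⟨β, hu⟩⟩
  · rw [ho] at h3
    exact absurd h3.1 (by decide)

noncomputable def fch (w : V → V → ℕ) (T : Set V) (A : Arena V 2) (v : V) : V :=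
  if h1 : v ∉ T ∧ A.owner v = 0 ∧ v ∈ attU A T (Fdom w T A) (GoodO w T A) then
    (exists_optstep w T A v h1.1 h1.2.1 h1.2.2).choose
  else if h2 : v ∉ T ∧ A.owner v = 0 ∧ v ∈ attU A T Set.univ (fun _ _ => True) then
    (exists_rstep A T v h2.1 h2.2.1 h2.2.2).choose
  else dflt A v

lemma fch_valid (w : V → V → ℕ) (T : Set V) (A : Arena V 2) (v : V) :
    A.E v (fch w T A v) := by
  unfold fch
  split_ifs with h1 h2
  · exact (exists_optstep w T A v h1.1 h1.2.1 h1.2.2).choose_spec.1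
  · exact (exists_rstep A T v h2.1 h2.2.1 h2.2.2).choose_spec.1
  · exact dflt_spec A v

/-- The uniformly optimal memoryless strategy. -/
noncomputable def sigmaF (w : V → V → ℕ) (T : Set V) (A : Arena V 2) : A.Strategy :=
  ⟨fun _ v => fch w T A v, fun _ v => fch_valid w T A v⟩

lemma R1 (w : V → V → ℕ) (T : Set V) (A : Arena V 2) :
    ∀ α : Ordinal.{0}, ∀ v, v ∈ att A T (Fdom w T A) (GoodO w T A) α →
    ∀ π, A.IsPlay π → π 0 = v → A.Consistent 0 (sigmaF w T A) π →
    ∃ k, π k ∈ T ∧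
      (∑ j ∈ Finset.range k, (w (π j) (π (j + 1)) : ℝ≥0∞)) ≤ valIS A (spCost w T) v := by
  intro α
  induction α using Ordinal.induction with
  | h α IH =>
    intro v hv π hp h0 hc
    by_cases hvT : v ∈ T
    · exact ⟨0, by rw [h0]; exact hvT, by simp⟩
    have hv' := hv
    rw [att_eq] at hv'
    have hp' : A.IsPlay (fun m => π (m + 1)) := fun j => hp (j + 1)
    have hc' : A.Consistent 0 (sigmaF w T A) (fun m => π (m + 1)) := fun j hj => hc (j + 1) hj
    rcases hv'.2 with h1 | h2 | h3
    · exact absurd h1 hvT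
    · have ho : A.owner v = 0 := h2.1
      have hcond : v ∉ T ∧ A.owner v = 0 ∧ v ∈ attU A T (Fdom w T A) (GoodO w T A) :=
        ⟨hvT, ho, ⟨α, hv⟩⟩
      obtain ⟨hE, hG, hrk, hu⟩ := (exists_optstep w T A v hcond.1 hcond.2.1 hcond.2.2).choose_spec
      set u := (exists_optstep w T A v hcond.1 hcond.2.1 hcond.2.2).choose with hudef
      have h1' : π 1 = u := by
        have hcc := hc 0 (by rw [h0]; exact ho)
        rw [hcc, h0]
        show fch w T A v = u
        unfold fch
        rw [dif_pos hcond]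
      obtain ⟨k', hk'T, hk'sum⟩ := IH (rank A T (Fdom w T A) (GoodO w T A) u)
        (lt_of_lt_of_le hrk (rank_le hv)) u (mem_att_rank hu) (fun m => π (m + 1)) hp'
        (show π 1 = u from h1') hc'
      refine ⟨k' + 1, hk'T, ?_⟩
      have hsum : (∑ j ∈ Finset.range (k' + 1), (w (π j) (π (j + 1)) : ℝ≥0∞))
          = (w (π 0) (π 1) : ℝ≥0∞)
            + ∑ j ∈ Finset.range k', (w (π (j + 1)) (π (j + 1 + 1)) : ℝ≥0∞) := by
        rw [Finset.sum_range_succ' (fun j => (w (π j) (π (j + 1)) : ℝ≥0∞)) k', add_comm]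
      calc (∑ j ∈ Finset.range (k' + 1), (w (π j) (π (j + 1)) : ℝ≥0∞))
          = (w (π 0) (π 1) : ℝ≥0∞)
            + ∑ j ∈ Finset.range k', (w (π (j + 1)) (π (j + 1 + 1)) : ℝ≥0∞) := hsum
        _ ≤ (w v u : ℝ≥0∞) + valIS A (spCost w T) u := by
            rw [h0, h1']
            exact add_le_add_right hk'sum _
        _ ≤ valIS A (spCost w T) v := hG
    · have ho : A.owner v = 1 := h3.1
      have hE : A.E v (π 1) := by have hh := hp 0; rwa [h0] at hh
      obtain ⟨β, hβ, hu⟩ := h3.2 (π 1) hE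
      obtain ⟨k', hk'T, hk'sum⟩ := IH β hβ (π 1) hu (fun m => π (m + 1)) hp' rfl hc'
      refine ⟨k' + 1, hk'T, ?_⟩
      have hsum : (∑ j ∈ Finset.range (k' + 1), (w (π j) (π (j + 1)) : ℝ≥0∞))
          = (w (π 0) (π 1) : ℝ≥0∞)
            + ∑ j ∈ Finset.range k', (w (π (j + 1)) (π (j + 1 + 1)) : ℝ≥0∞) := by
        rw [Finset.sum_range_succ' (fun j => (w (π j) (π (j + 1)) : ℝ≥0∞)) k', add_comm]
      calc (∑ j ∈ Finset.range (k' + 1), (w (π j) (π (j + 1)) : ℝ≥0∞))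
          = (w (π 0) (π 1) : ℝ≥0∞)
            + ∑ j ∈ Finset.range k', (w (π (j + 1)) (π (j + 1 + 1)) : ℝ≥0∞) := hsum
        _ ≤ (w (π 0) (π 1) : ℝ≥0∞) + valIS A (spCost w T) (π 1) := add_le_add_right hk'sum _
        _ ≤ valIS A (spCost w T) v := by
            rw [h0]
            exact bellman2 w T A v (π 1) ho hvT hE

lemma R2 (w : V → V → ℕ) (T : Set V) (A : Arena V 2) :
    ∀ α : Ordinal.{0}, ∀ v, v ∈ att A T Set.univ (fun _ _ => True) α →
    ∀ π, A.IsPlay π → π 0 = v → A.Consistent 0 (sigmaF w T A) π → ∃ j, π j ∈ T := by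
  intro α
  induction α using Ordinal.induction with
  | h α IH =>
    intro v hv π hp h0 hc
    by_cases hvT : v ∈ T
    · exact ⟨0, by rw [h0]; exact hvT⟩
    by_cases hvF : valIS A (spCost w T) v < ⊤
    · have hattV := F_subset_attV w T A v hvF
      obtain ⟨k, hk, _⟩ := R1 w T A (rank A T (Fdom w T A) (GoodO w T A) v) v
        (mem_att_rank hattV) π hp h0 hc
      exact ⟨k, hk⟩
    have hv' := hv
    rw [att_eq] at hv'
    have hp' : A.IsPlay (fun m => π (m + 1)) := fun j => hp (j + 1)
    have hc' : A.Consistent 0 (sigmaF w T A) (fun m => π (m + 1)) := fun j hj => hc (j + 1) hj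
    rcases hv'.2 with h1 | h2 | h3
    · exact absurd h1 hvT
    · have ho := h2.1
      have hnotV : v ∉ attU A T (Fdom w T A) (GoodO w T A) := by
        rintro ⟨β, hβ⟩
        have hD : v ∈ Fdom w T A := att_subset_D hβ
        exact hvF hD
      have hcond2 : v ∉ T ∧ A.owner v = 0 ∧ v ∈ attU A T Set.univ (fun _ _ => True) :=
        ⟨hvT, ho, ⟨α, hv⟩⟩
      obtain ⟨hE, hrk, hu⟩ := (exists_rstep A T v hcond2.1 hcond2.2.1 hcond2.2.2).choose_spec
      set u := (exists_rstep A T v hcond2.1 hcond2.2.1 hcond2.2.2).choose with hudef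
      have h1' : π 1 = u := by
        have hcc := hc 0 (by rw [h0]; exact ho)
        rw [hcc, h0]
        show fch w T A v = u
        unfold fch
        rw [dif_neg (fun hC1 => hnotV hC1.2.2), dif_pos hcond2]
      obtain ⟨j, hj⟩ := IH (rank A T Set.univ (fun _ _ => True) u)
        (lt_of_lt_of_le hrk (rank_le hv)) u (mem_att_rank hu) (fun m => π (m + 1)) hp'
        (show π 1 = u from h1') hc'
      exact ⟨j + 1, hj⟩
    · have hE : A.E v (π 1) := by have hh := hp 0; rwa [h0] at hh
      obtain ⟨β, hβ, hu⟩ := h3.2 (π 1) hE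
      obtain ⟨j, hj⟩ := IH β hβ (π 1) hu (fun m => π (m + 1)) hp' rfl hc'
      exact ⟨j + 1, hj⟩

end SPA
/-- In a zero-sum shortest-path game, player 1 has a memoryless
uniformly optimal strategy that is also uniformly winning in the associated
zero-sum reachability game. -/
theorem spath_player1_memoryless_uniformly_optimal
    (V : Type) (A : Arena V 2) (T : Set V) (w : V → V → ℕ) :
    ∃ σ1 : A.Strategy, Memoryless σ1 ∧
      (∀ (v : V) (π : ℕ → V), A.IsPlay π → π 0 = v → A.Consistent 0 σ1 π →
        spCost w T π ≤ valIS A (spCost w T) v) ∧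
      (∀ v ∈ WinRegion A 0 (ReachObj T),
        ∀ π : ℕ → V, A.IsPlay π → π 0 = v → A.Consistent 0 σ1 π → ∃ j, π j ∈ T) := by
  refine ⟨SPA.sigmaF w T A, fun _ _ _ => rfl, ?_, ?_⟩
  · intro v π hp h0 hc
    by_cases hvF : valIS A (spCost w T) v < ⊤
    · have hattV := SPA.F_subset_attV w T A v hvF
      obtain ⟨k, hkT, hsum⟩ := SPA.R1 w T A
        (SPA.rank A T (SPA.Fdom w T A) (SPA.GoodO w T A) v) v
        (SPA.mem_att_rank hattV) π hp h0 hc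
      exact le_trans (SPA.spCost_le_sum w T π k hkT) hsum
    · rw [not_lt, top_le_iff] at hvF
      rw [hvF]
      exact le_top
  · intro v hw π hp h0 hc
    obtain ⟨α, hα⟩ := SPA.win_subset_attR A T v hw
    exact SPA.R2 w T A α v hα π hp h0 hc
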